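/- Let i ∈ {0,1} and j ∈ {1,2}, and let G = (V, lab, args, r) be a λ-term-graph over Σλ^{i,j} with correct abstraction-prefix function P. Then access paths may end in variable vertices (label 0), but pass only through vertices in V(λ) ∪ V(@) ∪ V(S), and they depart from scope-delimiter vertices (label S) only via the 0-indexed edge. -/

import Mathlib

/-! Common framework: term graphs over a signature, homomorphisms, bisimulations,
    access paths, λ-ho-term-graphs, λ-ap-ho-term-graphs, λ-term-graphs with
    scope delimiters, and the translation constructions. -/

inductive Lab3 : Type
  | app | lam | var
  deriving DecidableEq

/-- Arity function of the signature Σλ^i = {@, λ, 0} with ar(@)=2, ar(λ)=1, ar(0)=i. -/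
def ar3 (i : ℕ) : Lab3 → ℕ
  | .app => 2
  | .lam => 1
  | .var => i

inductive Lab4 : Type
  | app | lam | var | del
  deriving DecidableEq

/-- Arity function of Σλ^{i,j} = {@, λ, 0, S} with ar(@)=2, ar(λ)=1, ar(0)=i, ar(S)=j. -/
def ar4 (i j : ℕ) : Lab4 → ℕ
  | .app => 2
  | .lam => 1
  | .var => i
  | .del => j

def lab3to4 : Lab3 → Lab4
  | .app => .app
  | .lam => .lam
  | .var => .var

def lab4to3 : Lab4 → Lab3
  | .app => .app
  | .lam => .lam
  | .var => .var
  | .del => .var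

/-- A term graph over a signature: vertex labelling, argument (successor) lists of
    length matching the arity of the label, a root, and every vertex reachable
    from the root. -/
structure TermGraph (L : Type) (ar : L → ℕ) (V : Type) where
  lab : V → L
  args : V → List V
  root : V
  args_len : ∀ v, (args v).length = ar (lab v)
  reach : ∀ v, Relation.ReflTransGen (fun a b => b ∈ args a) root v

namespace TermGraph

variable {L V : Type} {ar : L → ℕ}

/-- `G.Succ k w w'` : `w'` is the `k`-th successor of `w` (the edge w ↣_k w'). -/
def Succ (G : TermGraph L ar V) (k : ℕ) (w w' : V) : Prop :=
  (G.args w)[k]? = some w'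

/-- `G.Edge w w'` : `w'` is some successor of `w` (the relation ↣). -/
def Edge (G : TermGraph L ar V) (w w' : V) : Prop :=
  w' ∈ G.args w

/-- Reachability ↠ along edges. -/
def Reaches (G : TermGraph L ar V) (w w' : V) : Prop :=
  Relation.ReflTransGen G.Edge w w'

end TermGraph

/-- Homomorphism (functional bisimulation) of term graphs. -/
def IsHom {L V₁ V₂ : Type} {ar : L → ℕ} (h : V₁ → V₂)
    (G₁ : TermGraph L ar V₁) (G₂ : TermGraph L ar V₂) : Prop :=
  (∀ v, G₂.lab (h v) = G₁.lab v) ∧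
  (∀ v, G₂.args (h v) = (G₁.args v).map h) ∧
  h G₁.root = G₂.root

/-- Bisimulation between term graphs: a term graph on a set of pairs, rooted at the
    pair of roots, whose two projections are homomorphisms. -/
def Bisim {L V₁ V₂ : Type} {ar : L → ℕ}
    (G₁ : TermGraph L ar V₁) (G₂ : TermGraph L ar V₂) : Prop :=
  ∃ (S : Set (V₁ × V₂)) (R : TermGraph L ar S),
    (R.root : V₁ × V₂) = (G₁.root, G₂.root) ∧
    IsHom (fun x : S => x.val.1) R G₁ ∧
    IsHom (fun x : S => x.val.2) R G₂

/-- An access path of a vertex `w`: a path from the root to `w` (with edge indices)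
    that visits no vertex twice. -/
structure AccessPath {L V : Type} {ar : L → ℕ} (G : TermGraph L ar V) (w : V) where
  n : ℕ
  vs : Fin (n + 1) → V
  ks : Fin n → ℕ
  start : vs 0 = G.root
  finish : vs (Fin.last n) = w
  step : ∀ m : Fin n, G.Succ (ks m) (vs m.castSucc) (vs m.succ)
  inj : Function.Injective vs

/-- The conditions (root), (self), (nest), (closed), (scope)₀ and (for i = 1) (scope)₁
    on a scope function. -/
def ScopeConds (i : ℕ) {V : Type} (G : TermGraph Lab3 (ar3 i) V)
    (Sc : V → Set V) : Prop :=
  (∀ v, G.lab v = .lam → G.root ∉ Sc v \ {v}) ∧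
  (∀ v, G.lab v = .lam → v ∈ Sc v) ∧
  (∀ v₀ v₁, G.lab v₀ = .lam → G.lab v₁ = .lam → v₁ ∈ Sc v₀ \ {v₀} →
      Sc v₁ ⊆ Sc v₀ \ {v₀}) ∧
  (∀ v w wk k, G.lab v = .lam → G.Succ k w wk → wk ∈ Sc v \ {v} → w ∈ Sc v) ∧
  (∀ w, G.lab w = .var → ∃ v, G.lab v = .lam ∧ w ∈ Sc v \ {v}) ∧
  (i = 1 → ∀ w w₀, G.lab w = .var → G.Succ 0 w w₀ →
      G.lab w₀ = .lam ∧ ∀ v, G.lab v = .lam → (w ∈ Sc v ↔ w₀ ∈ Sc v))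

/-- λ-ho-term-graph over Σλ^i: a Σλ^i-term-graph endowed with a scope function. -/
structure LamHoTG (i : ℕ) (V : Type) extends TermGraph Lab3 (ar3 i) V where
  Sc : V → Set V
  conds : ScopeConds i toTermGraph Sc

/-- Correctness of an abstraction-prefix function for a Σλ^i-term-graph:
    (root), (λ), (@), (0)₀, and (for i = 1) (0)₁. -/
def CorrectAP (i : ℕ) {V : Type} (G : TermGraph Lab3 (ar3 i) V)
    (P : V → List V) : Prop :=
  (P G.root = []) ∧
  (∀ w w₀, G.lab w = .lam → G.Succ 0 w w₀ → P w₀ <+: P w ++ [w]) ∧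
  (∀ w wk k, G.lab w = .app → G.Succ k w wk → P wk <+: P w) ∧
  (∀ w, G.lab w = .var → P w ≠ []) ∧
  (i = 1 → ∀ w w₀, G.lab w = .var → G.Succ 0 w w₀ →
      G.lab w₀ = .lam ∧ P w₀ ++ [w₀] = P w)

/-- λ-ap-ho-term-graph over Σλ^i: a Σλ^i-term-graph endowed with a correct
    abstraction-prefix function. -/
structure LamApHoTG (i : ℕ) (V : Type) extends TermGraph Lab3 (ar3 i) V where
  P : V → List V
  correct : CorrectAP i toTermGraph P

/-- `ScToP G Sc P` : the abstraction-prefix function `P` is the one obtained from the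
    scope function `Sc` by the mapping A_i: for each vertex `w`, `P w` lists exactly
    the binders of `w` other than `w` itself, in order of strictly decreasing scopes. -/
def ScToP {i : ℕ} {V : Type} (G : TermGraph Lab3 (ar3 i) V)
    (Sc : V → Set V) (P : V → List V) : Prop :=
  ∀ w, (∀ v, v ∈ P w ↔ (G.lab v = .lam ∧ w ∈ Sc v ∧ v ≠ w)) ∧
    (P w).Chain' (fun a b => Sc b ⊂ Sc a)

/-- The scope function obtained from an abstraction-prefix function by the mapping B_i:
    Sc(v) = { w | v occurs in P(w) } ∪ {v}. -/
def ScOfP {V : Type} (P : V → List V) : V → Set V :=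
  fun v => {w | v ∈ P w} ∪ {v}

/-- Homomorphism of λ-ho-term-graphs (given by their underlying term graphs and
    scope functions). -/
def IsHoHom {i : ℕ} {V₁ V₂ : Type} (h : V₁ → V₂)
    (G₁ : TermGraph Lab3 (ar3 i) V₁) (Sc₁ : V₁ → Set V₁)
    (G₂ : TermGraph Lab3 (ar3 i) V₂) (Sc₂ : V₂ → Set V₂) : Prop :=
  IsHom h G₁ G₂ ∧ ∀ v, G₁.lab v = .lam → h '' Sc₁ v = Sc₂ (h v)

/-- Homomorphism of λ-ap-ho-term-graphs (given by their underlying term graphs and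
    abstraction-prefix functions). -/
def IsApHom {i : ℕ} {V₁ V₂ : Type} (h : V₁ → V₂)
    (G₁ : TermGraph Lab3 (ar3 i) V₁) (P₁ : V₁ → List V₁)
    (G₂ : TermGraph Lab3 (ar3 i) V₂) (P₂ : V₂ → List V₂) : Prop :=
  IsHom h G₁ G₂ ∧ ∀ v, (P₁ v).map h = P₂ (h v)

/-- Correctness of an abstraction-prefix function for a Σλ^{i,j}-term-graph:
    (root), (λ), (@), (0)₀, (0)₁ (for i = 1), (S)₁, and (S)₂ (for j = 2). -/
def CorrectAP4 (i j : ℕ) {V : Type} (G : TermGraph Lab4 (ar4 i j) V)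
    (P : V → List V) : Prop :=
  (P G.root = []) ∧
  (∀ w w₀, G.lab w = .lam → G.Succ 0 w w₀ → P w₀ = P w ++ [w]) ∧
  (∀ w wk k, G.lab w = .app → G.Succ k w wk → P wk = P w) ∧
  (∀ w, G.lab w = .var → P w ≠ []) ∧
  (i = 1 → ∀ w w₀, G.lab w = .var → G.Succ 0 w w₀ →
      G.lab w₀ = .lam ∧ P w₀ ++ [w₀] = P w) ∧
  (∀ w w₀, G.lab w = .del → G.Succ 0 w w₀ → ∃ v, P w₀ ++ [v] = P w) ∧
  (j = 2 → ∀ w w₁, G.lab w = .del → G.Succ 1 w w₁ →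
      G.lab w₁ = .lam ∧ P w₁ ++ [w₁] = P w)

/-- Vertex-set predicate of the construction G_i^j: original vertices (inl) together
    with scope-delimiter vertices (w, k, w', p) inserted along an edge w ↣_k w',
    one for each prefix p with P(w') < p ≤ P(w)·w (for λ-vertices w),
    resp. P(w') < p ≤ P(w) (for @-vertices w). -/
def GVP {i : ℕ} {V : Type} (G : TermGraph Lab3 (ar3 i) V) (P : V → List V) :
    V ⊕ (V × ℕ × V × List V) → Prop
  | .inl _ => True
  | .inr (w, k, w', p) =>
      G.Succ k w w' ∧ P w' <+: p ∧ P w' ≠ p ∧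
      ((G.lab w = .lam ∧ p <+: P w ++ [w]) ∨ (G.lab w = .app ∧ p <+: P w))

/-- Vertex set of the image of G_i^j. -/
def GVert {i : ℕ} {V : Type} (G : TermGraph Lab3 (ar3 i) V) (P : V → List V) : Type :=
  { x : V ⊕ (V × ℕ × V × List V) // GVP G P x }

/-- Labelling of the image of G_i^j: original labels on original vertices,
    `S` on the inserted delimiter vertices. -/
def GLab {i : ℕ} {V : Type} (G : TermGraph Lab3 (ar3 i) V) (P : V → List V)
    (x : GVert G P) : Lab4 :=
  match x.val with
  | .inl w => lab3to4 (G.lab w)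
  | .inr _ => .del

/-- The successor relation of the image of G_i^j (clauses as in the definition of
    the mapping G_i^j; for j = 2 the inserted S-vertices carry a 1-indexed back-link
    to the abstraction vertex whose extended scope they close). -/
def CSucc {i : ℕ} {V : Type} (j : ℕ) (G : TermGraph Lab3 (ar3 i) V) (P : V → List V)
    (k : ℕ) (x y : GVert G P) : Prop :=
  (∃ w wk, x.val = .inl w ∧ y.val = .inl wk ∧ G.Succ k w wk ∧
     (G.lab w = .var ∨ (G.lab w = .lam ∧ P wk = P w ++ [w]) ∨
      (G.lab w = .app ∧ P wk = P w))) ∨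
  (∃ w w₀, x.val = .inl w ∧ G.lab w = .lam ∧ G.Succ 0 w w₀ ∧ P w₀ ≠ P w ++ [w] ∧
     k = 0 ∧ y.val = .inr (w, 0, w₀, P w ++ [w])) ∨
  (∃ w wk, x.val = .inl w ∧ G.lab w = .app ∧ G.Succ k w wk ∧ P wk ≠ P w ∧
     y.val = .inr (w, k, wk, P w)) ∨
  (∃ w k' w' p v, x.val = .inr (w, k', w', p ++ [v]) ∧ k = 0 ∧ P w' ≠ p ∧
     y.val = .inr (w, k', w', p)) ∨
  (∃ w k' w' v, x.val = .inr (w, k', w', P w' ++ [v]) ∧ k = 0 ∧ y.val = .inl w') ∨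
  (j = 2 ∧ ∃ w k' w' p v, x.val = .inr (w, k', w', p ++ [v]) ∧ k = 1 ∧ y.val = .inl v)

/-- `IsGImage i j G P G'` : the Σλ^{i,j}-term-graph `G'` is the image of the
    λ-ap-ho-term-graph given by `G` and `P` under the mapping G_i^j. -/
def IsGImage (i j : ℕ) {V : Type} (G : TermGraph Lab3 (ar3 i) V) (P : V → List V)
    (G' : TermGraph Lab4 (ar4 i j) (GVert G P)) : Prop :=
  (G'.root).val = .inl G.root ∧
  (∀ x, G'.lab x = GLab G P x) ∧
  (∀ k x y, G'.Succ k x y ↔ CSucc j G P k x y)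

/-- One step along the 0-indexed edge of a scope-delimiter vertex. -/
def DelStep {i j : ℕ} {V : Type} (G : TermGraph Lab4 (ar4 i j) V) (a b : V) : Prop :=
  G.lab a = .del ∧ G.Succ 0 a b

/-- The non-delimiter vertices of a Σλ^{i,j}-term-graph. -/
def NVert {i j : ℕ} {V : Type} (G : TermGraph Lab4 (ar4 i j) V) : Type :=
  { v : V // G.lab v ≠ .del }

/-- `IsNImage i j G P G' P'` : the Σλ^i-term-graph `G'` with abstraction-prefix
    function `P'` is the image of the λ-term-graph `G` (with correct prefix
    function `P`) under the mapping N_i^j: S-vertices are deleted, labels and the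
    prefix function are restricted, the root is kept, and w₀ ↣'_k w₁ holds iff
    w₁ is reached from the k-th successor of w₀ by passing through finitely many
    S-vertices along their 0-indexed edges. -/
def IsNImage (i j : ℕ) {V : Type} (G : TermGraph Lab4 (ar4 i j) V) (P : V → List V)
    (G' : TermGraph Lab3 (ar3 i) (NVert G)) (P' : NVert G → List (NVert G)) : Prop :=
  (G'.root).val = G.root ∧
  (∀ x : NVert G, G'.lab x = lab4to3 (G.lab x.val)) ∧
  (∀ k (a b : NVert G), G'.Succ k a b ↔
      ∃ u, G.Succ k a.val u ∧ Relation.ReflTransGen (DelStep G) u b.val) ∧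
  (∀ v : NVert G, (P' v).map Subtype.val = P v.val)

/-- A λ-term-graph over Σλ^{1,2} (given by `G` with correct prefix function `P`) is
    fully back-linked if the last vertex of the abstraction prefix of any vertex `w`
    is reachable from `w`. -/
def FullyBackLinked {V : Type} (G : TermGraph Lab4 (ar4 1 2) V)
    (P : V → List V) : Prop :=
  ∀ w v p, P w = p ++ [v] → G.Reaches w v

/-- Eager-scope: whenever P(w) = p·v there is a path from `w` to `v` which ends with
    a 0-indexed edge from a variable vertex to `v`, and all of whose intermediate
    vertices have abstraction prefixes extending P(w). -/
def EagerScope {V : Type} (G : TermGraph Lab4 (ar4 1 2) V)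
    (P : V → List V) : Prop :=
  ∀ w v p, P w = p ++ [v] →
    ∃ (n : ℕ) (u : Fin (n + 1) → V),
      u 0 = w ∧
      (∀ m : Fin n, G.Edge (u m.castSucc) (u m.succ)) ∧
      G.Succ 0 (u (Fin.last n)) v ∧
      G.lab (u (Fin.last n)) = .var ∧
      ∀ m : Fin (n + 1), m ≠ 0 → P w <+: P (u m)

/-- Lemma 5.3(iv): in a λ-term-graph over Σλ^{i,j}, access paths may end in variable
    vertices, but pass only through vertices in V(λ) ∪ V(@) ∪ V(S), and they depart
    from scope-delimiter vertices only via the 0-indexed edge. -/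
theorem ltg_access_paths :
    ∀ i ∈ ({0, 1} : Set ℕ), ∀ j ∈ ({1, 2} : Set ℕ),
      ∀ (V : Type) (G : TermGraph Lab4 (ar4 i j) V) (P : V → List V),
        CorrectAP4 i j G P →
        ∀ (w : V) (p : AccessPath G w) (m : Fin p.n),
          (G.lab (p.vs m.castSucc) = Lab4.lam ∨ G.lab (p.vs m.castSucc) = Lab4.app ∨
           G.lab (p.vs m.castSucc) = Lab4.del) ∧
          (G.lab (p.vs m.castSucc) = Lab4.del → p.ks m = 0) := by
  intro i hi j hj V G P hP w p m
  obtain ⟨hroot, hlam, happ, hvar0, hvar1, hdel0, hdel1⟩ := hP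
  have hi' : i = 0 ∨ i = 1 := hi
  have hj' : j = 1 ∨ j = 2 := hj
  have hlen : ∀ (k : ℕ) (a b : V), G.Succ k a b → k < ar4 i j (G.lab a) := by
    intro k a b h
    have hk : k < (G.args a).length := by
      by_contra hk
      unfold TermGraph.Succ at h
      rw [List.getElem?_eq_none (le_of_not_gt hk)] at h
      exact Option.some_ne_none _ h.symm
    rwa [G.args_len] at hk
  have inv : ∀ m : Fin (p.n + 1), ∀ v ∈ P (p.vs m),
      ∃ t, t < m ∧ p.vs t = v := by
    intro m
    induction m using Fin.induction with
    | zero =>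
      intro v hv
      rw [p.start, hroot] at hv
      exact absurd hv List.not_mem_nil
    | succ m ih =>
      intro v hv
      have hstep := p.step m
      have hlt : m.castSucc < m.succ := Fin.castSucc_lt_succ
      have hmem : ∀ v ∈ P (p.vs m.castSucc), ∃ t, t < m.succ ∧ p.vs t = v := by
        intro v hv
        obtain ⟨t, ht, htv⟩ := ih v hv
        exact ⟨t, lt_trans ht hlt, htv⟩
      cases hl : G.lab (p.vs m.castSucc) with
      | app =>
        rw [happ _ _ _ hl hstep] at hv
        exact hmem v hv
      | lam =>
        have hk : p.ks m = 0 := by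
          have := hlen _ _ _ hstep
          rw [hl] at this
          simpa [ar4] using this
        rw [hk] at hstep
        rw [hlam _ _ hl hstep] at hv
        rcases List.mem_append.mp hv with h | h
        · exact hmem v h
        · exact ⟨m.castSucc, hlt, (List.mem_singleton.mp h).symm⟩
      | var =>
        rcases hi' with hi0 | hi1
        · subst hi0
          have := hlen _ _ _ hstep
          rw [hl] at this
          simp [ar4] at this
        · subst hi1
          have hk : p.ks m = 0 := by
            have := hlen _ _ _ hstep
            rw [hl] at this
            simpa [ar4] using this
          rw [hk] at hstep
          obtain ⟨-, hpe⟩ := hvar1 rfl _ _ hl hstep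
          exact hmem v (hpe ▸ List.mem_append_left _ hv)
      | del =>
        have hkj : p.ks m < j := by
          have := hlen _ _ _ hstep
          rwa [hl] at this
        have hcase : p.ks m = 0 ∨ (p.ks m = 1 ∧ j = 2) := by omega
        rcases hcase with hk | ⟨hk, hj2⟩
        · rw [hk] at hstep
          obtain ⟨u, hpe⟩ := hdel0 _ _ hl hstep
          exact hmem v (hpe ▸ List.mem_append_left _ hv)
        · rw [hk] at hstep
          obtain ⟨-, hpe⟩ := hdel1 hj2 _ _ hl hstep
          exact hmem v (hpe ▸ List.mem_append_left _ hv)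
  have hstep := p.step m
  have hlt : m.castSucc < m.succ := Fin.castSucc_lt_succ
  have hne : ∀ t : Fin (p.n + 1), t < m.castSucc → p.vs t ≠ p.vs m.succ := by
    intro t ht heq
    have := p.inj heq
    subst this
    exact absurd (lt_trans ht hlt) (lt_irrefl _)
  have hnotvar : G.lab (p.vs m.castSucc) ≠ .var := by
    intro hl
    rcases hi' with hi0 | hi1
    · subst hi0
      have := hlen _ _ _ hstep
      rw [hl] at this
      simp [ar4] at this
    · subst hi1
      have hk : p.ks m = 0 := by
        have := hlen _ _ _ hstep
        rw [hl] at this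
        simpa [ar4] using this
      rw [hk] at hstep
      obtain ⟨-, hpe⟩ := hvar1 rfl _ _ hl hstep
      have hb' : p.vs m.succ ∈ P (p.vs m.castSucc) :=
        hpe ▸ List.mem_append_right _ (List.mem_singleton_self _)
      obtain ⟨t, ht, htv⟩ := inv m.castSucc _ hb'
      exact hne t ht htv
  constructor
  · cases hl : G.lab (p.vs m.castSucc) with
    | app => exact Or.inr (Or.inl rfl)
    | lam => exact Or.inl rfl
    | del => exact Or.inr (Or.inr rfl)
    | var => exact absurd hl hnotvar
  · intro hl
    have hkj : p.ks m < j := by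
      have := hlen _ _ _ hstep
      rwa [hl] at this
    by_contra hk0
    have hk1 : p.ks m = 1 := by omega
    have hj2 : j = 2 := by omega
    rw [hk1] at hstep
    obtain ⟨-, hpe⟩ := hdel1 hj2 _ _ hl hstep
    have hb' : p.vs m.succ ∈ P (p.vs m.castSucc) :=
      hpe ▸ List.mem_append_right _ (List.mem_singleton_self _)
    obtain ⟨t, ht, htv⟩ := inv m.castSucc _ hb'
    exact hne t ht htv
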